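/- arXiv:1811.07515 — 7 statements merged into one kernel-verified Lean document; each statement's English description precedes it below -/
import Mathlib

section
/- For every real number λ > 0, the probability that a Poisson random variable with rate λ takes a value at most 0.8λ is at most e^{-0.01λ}; that is, ∑_{n ∈ ℕ, n ≤ 0.8λ} e^{-λ} λ^n / n! ≤ e^{-0.01λ}. -/
lemma real_exp_tsum (x : ℝ) : (∑' n : ℕ, x ^ n / (Nat.factorial n : ℝ)) = Real.exp x := by
  rw [Real.exp_eq_exp_ℝ, NormedSpace.exp_eq_tsum_div]

/-- Poisson lower tail: for `λ > 0`, `Pr[Pois(λ) ≤ 0.8λ] ≤ e^{-0.01λ}`. -/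
theorem poisson_lower_tail_08 (lam : ℝ) (hlam : 0 < lam) :
    (∑' n : ℕ, if (n : ℝ) ≤ 0.8 * lam
        then Real.exp (-lam) * lam ^ n / (Nat.factorial n : ℝ) else 0)
      ≤ Real.exp (-(0.01 * lam)) := by
  set t := Real.log (5/4) with ht
  have htpos : 0 < t := Real.log_pos (by norm_num)
  have h08 : Real.exp (-t) = 0.8 := by
    rw [Real.exp_neg, Real.exp_log (by norm_num)]; norm_num
  have key : ∀ n : ℕ, (if (n:ℝ) ≤ 0.8*lam then Real.exp (-lam) * lam^n / (Nat.factorial n : ℝ) else 0)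
      ≤ Real.exp (0.8*lam*t - lam) * ((0.8*lam)^n / (Nat.factorial n : ℝ)) := by
    intro n
    have hfac : (0:ℝ) < (Nat.factorial n : ℝ) := by positivity
    have hrw : Real.exp (0.8*lam*t - lam) * ((0.8*lam)^n / (Nat.factorial n : ℝ))
        = Real.exp (0.8*lam*t - lam + (n:ℝ) * (-t)) * lam^n / (Nat.factorial n : ℝ) := by
      rw [← h08, mul_pow, ← Real.exp_nat_mul, Real.exp_add]
      ring
    rw [hrw]
    split_ifs with h
    · have hexp : Real.exp (-lam) ≤ Real.exp (0.8*lam*t - lam + (n:ℝ) * (-t)) := by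
        apply Real.exp_le_exp.2
        nlinarith [htpos, h]
      have hpow : (0:ℝ) ≤ lam ^ n := by positivity
      gcongr
    · positivity
  have hsumR : Summable (fun n : ℕ => Real.exp (0.8*lam*t - lam) * ((0.8*lam)^n / (Nat.factorial n : ℝ))) :=
    (Real.summable_pow_div_factorial (0.8*lam)).mul_left _
  have hsumL : Summable (fun n : ℕ => if (n:ℝ) ≤ 0.8*lam then Real.exp (-lam) * lam^n / (Nat.factorial n : ℝ) else 0) := by
    apply Summable.of_nonneg_of_le ?_ key hsumR
    intro n; split_ifs <;> positivity
  calc (∑' n : ℕ, if (n : ℝ) ≤ 0.8 * lam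
        then Real.exp (-lam) * lam ^ n / (Nat.factorial n : ℝ) else 0)
      ≤ ∑' n : ℕ, Real.exp (0.8*lam*t - lam) * ((0.8*lam)^n / (Nat.factorial n : ℝ)) :=
        Summable.tsum_le_tsum key hsumL hsumR
    _ = Real.exp (0.8*lam*t - lam) * Real.exp (0.8*lam) := by
        rw [tsum_mul_left, real_exp_tsum]
    _ = Real.exp (0.8*lam*t - 0.2*lam) := by rw [← Real.exp_add]; ring_nf
    _ ≤ Real.exp (-(0.01 * lam)) := by
        apply Real.exp_le_exp.2
        have hlog : t ≤ 0.2375 := by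
          rw [ht, Real.log_le_iff_le_exp (by norm_num)]
          have h1 : (0.11875 : ℝ) + 1 ≤ Real.exp 0.11875 := Real.add_one_le_exp 0.11875
          have h2 : Real.exp 0.11875 * Real.exp 0.11875 = Real.exp 0.2375 := by
            rw [← Real.exp_add]; norm_num
          nlinarith [Real.exp_pos (0.11875 : ℝ)]
        nlinarith
end

section
/- For all real numbers k > 0 and μ with μ ≥ 2k, a Poisson random variable with rate μ takes a value at most 1.6k with probability at most e^{-0.02k}; that is, ∑_{n ∈ ℕ, n ≤ 1.6k} e^{-μ} μ^n / n! ≤ e^{-0.02k}. -/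
lemma exp_tsum_div (x : ℝ) : (∑' n : ℕ, x ^ n / (n.factorial:ℝ)) = Real.exp x := by
  rw [Real.exp_eq_exp_ℝ, NormedSpace.exp_eq_tsum_div]

/-- Completeness case of the Goldwasser–Sipser-style AM protocol for
Gap-Inner-Product: for `k > 0` and `μ ≥ 2k`, `Pr[Pois(μ) ≤ 1.6k] ≤ e^{-0.02k}`. -/
theorem poisson_completeness_tail (k mu : ℝ) (hk : 0 < k) (hmu : 2 * k ≤ mu) :
    (∑' n : ℕ, if (n : ℝ) ≤ 1.6 * k
        then Real.exp (-mu) * mu ^ n / (Nat.factorial n : ℝ) else 0)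
      ≤ Real.exp (-(0.02 * k)) := by
  have hmu0 : 0 ≤ mu := le_trans (by linarith) hmu
  set c : ℝ := (0.8 : ℝ) ^ (-(1.6 * k)) with hc
  have hc0 : 0 < c := Real.rpow_pos_of_pos (by norm_num) _
  set g : ℕ → ℝ := fun n => Real.exp (-mu) * c * ((0.8 * mu) ^ n / (n.factorial:ℝ)) with hg
  have hgsum : Summable g := (Real.summable_pow_div_factorial (0.8 * mu)).mul_left _
  -- termwise bound
  have hterm : ∀ n : ℕ, (if (n : ℝ) ≤ 1.6 * k
      then Real.exp (-mu) * mu ^ n / (Nat.factorial n : ℝ) else 0) ≤ g n := by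
    intro n
    by_cases h : (n : ℝ) ≤ 1.6 * k
    · simp only [h, if_true, hg]
      have key : mu ^ n ≤ c * (0.8 * mu) ^ n := by
        have : (1 : ℝ) ≤ c * (0.8 : ℝ) ^ n := by
          have : c * (0.8 : ℝ) ^ n = (0.8 : ℝ) ^ ((n : ℝ) - 1.6 * k) := by
            rw [hc, ← Real.rpow_natCast (0.8 : ℝ) n, ← Real.rpow_add (by norm_num)]
            ring_nf
          rw [this]
          exact Real.one_le_rpow_of_pos_of_le_one_of_nonpos (by norm_num) (by norm_num)
            (by linarith)
        calc mu ^ n = 1 * mu ^ n := (one_mul _).symm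
          _ ≤ (c * (0.8 : ℝ) ^ n) * mu ^ n := by
              exact mul_le_mul_of_nonneg_right this (pow_nonneg hmu0 n)
          _ = c * (0.8 * mu) ^ n := by rw [mul_pow]; ring
      have hfac : (0 : ℝ) < (n.factorial : ℝ) := by positivity
      calc Real.exp (-mu) * mu ^ n / (n.factorial : ℝ)
          ≤ Real.exp (-mu) * (c * (0.8 * mu) ^ n) / (n.factorial : ℝ) := by
            gcongr
        _ = Real.exp (-mu) * c * ((0.8 * mu) ^ n / (n.factorial:ℝ)) := by ring
    · simp only [h, if_false, hg]
      positivity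
  have hfsum : Summable (fun n : ℕ => if (n : ℝ) ≤ 1.6 * k
      then Real.exp (-mu) * mu ^ n / (Nat.factorial n : ℝ) else 0) := by
    apply Summable.of_nonneg_of_le _ hterm hgsum
    intro n
    by_cases h : (n : ℝ) ≤ 1.6 * k <;> simp [h] <;> positivity
  calc (∑' n : ℕ, if (n : ℝ) ≤ 1.6 * k
        then Real.exp (-mu) * mu ^ n / (Nat.factorial n : ℝ) else 0)
      ≤ ∑' n, g n := Summable.tsum_le_tsum hterm hfsum hgsum
    _ = Real.exp (-mu) * c * Real.exp (0.8 * mu) := by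
        rw [hg, tsum_mul_left, exp_tsum_div]
    _ ≤ Real.exp (-(0.02 * k)) := by
        have hlog : Real.log 0.8 ≥ -0.2375 := by
          rw [ge_iff_le, ← Real.exp_le_exp, Real.exp_log (by norm_num : (0:ℝ) < 0.8)]
          have h1 : Real.exp 0.2375 ≥ 1.25 := by
            have := Real.add_one_le_exp (0.11875 : ℝ)
            calc (1.25 : ℝ) ≤ (0.11875 + 1)^2 := by norm_num
              _ ≤ (Real.exp 0.11875)^2 := by
                  apply pow_le_pow_left₀ (by norm_num) this
              _ = Real.exp 0.2375 := by
                  rw [← Real.exp_nat_mul]; norm_num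
          calc Real.exp (-0.2375) = (Real.exp 0.2375)⁻¹ := by
                rw [← Real.exp_neg]
            _ ≤ (1.25 : ℝ)⁻¹ := by
                apply inv_anti₀ (by norm_num) h1
            _ = 0.8 := by norm_num
        have hceq : c = Real.exp (-(1.6 * k) * Real.log 0.8) := by
          rw [hc, Real.rpow_def_of_pos (by norm_num)]; ring_nf
        rw [hceq, ← Real.exp_add, ← Real.exp_add, Real.exp_le_exp]
        nlinarith [hlog, hk.le, hmu]
end

section
/- For all real numbers k > 0 and μ with 0 < μ ≤ k, a Poisson random variable with rate μ takes a value at least 1.2k with probability at most e^{-0.01k}; that is, ∑_{n ∈ ℕ, n ≥ 1.2k} e^{-μ} μ^n / n! ≤ e^{-0.01k}. -/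
lemma exp_le_inv_one_sub' {x : ℝ} (hx1 : x < 1) :
    Real.exp x ≤ (1 - x)⁻¹ := by
  have h : 1 - x ≤ Real.exp (-x) := by
    have := Real.add_one_le_exp (-x); linarith
  have h0 : 0 < 1 - x := by linarith
  rw [Real.exp_neg] at h
  calc Real.exp x = ((Real.exp x)⁻¹)⁻¹ := by rw [inv_inv]
    _ ≤ (1 - x)⁻¹ := inv_anti₀ h0 h

lemma log_twelve_tenths : (0.175 : ℝ) ≤ Real.log 1.2 := by
  rw [Real.le_log_iff_exp_le (by norm_num)]
  have h1 : Real.exp 0.175 = Real.exp (0.175 / 3) ^ (3 : ℕ) := by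
    rw [← Real.exp_nat_mul]; norm_num
  have h2 : Real.exp (0.175 / 3) ≤ (1 - 0.175 / 3)⁻¹ :=
    exp_le_inv_one_sub' (by norm_num)
  have h3 : Real.exp (0.175 / 3) ^ (3 : ℕ) ≤ ((1 - 0.175 / 3)⁻¹) ^ (3 : ℕ) :=
    pow_le_pow_left₀ (Real.exp_pos _).le h2 3
  rw [h1]
  refine h3.trans ?_
  norm_num

/-- Soundness case of the Goldwasser–Sipser-style AM protocol for
Gap-Inner-Product: for `k > 0` and `0 < μ ≤ k`, `Pr[Pois(μ) ≥ 1.2k] ≤ e^{-0.01k}`. -/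
theorem poisson_soundness_tail (k mu : ℝ) (hk : 0 < k) (hmu0 : 0 < mu)
    (hmu : mu ≤ k) :
    (∑' n : ℕ, if 1.2 * k ≤ (n : ℝ)
        then Real.exp (-mu) * mu ^ n / (Nat.factorial n : ℝ) else 0)
      ≤ Real.exp (-(0.01 * k)) := by
  set c : ℝ := Real.exp (-mu - 1.2 * k * Real.log 1.2) with hc
  set g : ℕ → ℝ := fun n => c * ((1.2 * mu) ^ n / (Nat.factorial n : ℝ)) with hg
  have hgsum : Summable g := (Real.summable_pow_div_factorial (1.2 * mu)).mul_left c
  have hlog : (0 : ℝ) < Real.log 1.2 := lt_of_lt_of_le (by norm_num) log_twelve_tenths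
  have hle : ∀ n : ℕ, (if 1.2 * k ≤ (n : ℝ)
      then Real.exp (-mu) * mu ^ n / (Nat.factorial n : ℝ) else 0) ≤ g n := by
    intro n
    by_cases h : 1.2 * k ≤ (n : ℝ)
    · rw [if_pos h, hg]
      have hfac : (0 : ℝ) < (Nat.factorial n : ℝ) := by positivity
      have key : Real.exp (-mu) ≤ c * (1.2 : ℝ) ^ n := by
        have h12 : (1.2 : ℝ) ^ n = Real.exp (n * Real.log 1.2) := by
          rw [Real.exp_nat_mul, Real.exp_log (by norm_num)]
        rw [hc, h12, ← Real.exp_add]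
        apply Real.exp_le_exp.2
        nlinarith [mul_le_mul_of_nonneg_right h hlog.le]
      have : Real.exp (-mu) * mu ^ n ≤ (c * (1.2 : ℝ) ^ n) * mu ^ n :=
        mul_le_mul_of_nonneg_right key (by positivity)
      calc Real.exp (-mu) * mu ^ n / (Nat.factorial n : ℝ)
          ≤ (c * (1.2 : ℝ) ^ n) * mu ^ n / (Nat.factorial n : ℝ) := by
            gcongr
        _ = c * ((1.2 * mu) ^ n / (Nat.factorial n : ℝ)) := by
            rw [mul_pow]; ring
    · rw [if_neg h]; positivity
  have hfsum : Summable (fun n : ℕ => if 1.2 * k ≤ (n : ℝ)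
      then Real.exp (-mu) * mu ^ n / (Nat.factorial n : ℝ) else 0) := by
    apply Summable.of_nonneg_of_le _ hle hgsum
    intro n
    by_cases h : 1.2 * k ≤ (n : ℝ)
    · rw [if_pos h]; positivity
    · rw [if_neg h]
  have htsum : (∑' n : ℕ, g n) = Real.exp (0.2 * mu - 1.2 * k * Real.log 1.2) := by
    rw [hg, tsum_mul_left, real_exp_tsum, hc, ← Real.exp_add]
    ring_nf
  calc (∑' n : ℕ, if 1.2 * k ≤ (n : ℝ)
        then Real.exp (-mu) * mu ^ n / (Nat.factorial n : ℝ) else 0)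
      ≤ ∑' n : ℕ, g n := Summable.tsum_le_tsum hle hfsum hgsum
    _ = Real.exp (0.2 * mu - 1.2 * k * Real.log 1.2) := htsum
    _ ≤ Real.exp (-(0.01 * k)) := by
        apply Real.exp_le_exp.2
        nlinarith [mul_le_mul_of_nonneg_left log_twelve_tenths
          (by positivity : (0:ℝ) ≤ 1.2 * k)]
end

section
/- For all d, t ∈ ℕ, there exists a finitely supported probability distribution μ over multivariate polynomials P in d variables over the field 𝔽₂ = ZMod 2 such that every polynomial in the support of μ has total degree at most t, and for every x ∈ {0,1}^d, the probability over P ∼ μ that P(x) = OR_d(x) is at least 1 − 2^{-t}, where OR_d(x) ∈ 𝔽₂ equals 0 if x = 0^d and equals 1 otherwise. -/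
open Finset MvPolynomial

namespace ProbOR

noncomputable def lin (d : ℕ) (r : Fin d → ZMod 2) : MvPolynomial (Fin d) (ZMod 2) :=
  ∑ i, MvPolynomial.C (r i) * MvPolynomial.X i

noncomputable def poly (d t : ℕ) (r : Fin t → Fin d → ZMod 2) :
    MvPolynomial (Fin d) (ZMod 2) :=
  1 - ∏ j, (1 - lin d (r j))

lemma lin_degree (d : ℕ) (r : Fin d → ZMod 2) : (lin d r).totalDegree ≤ 1 := by
  refine le_trans (totalDegree_finset_sum _ _) ?_
  refine Finset.sup_le fun i _ => ?_
  calc (C (r i) * X i).totalDegree ≤ (C (r i)).totalDegree + (X i).totalDegree :=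
        totalDegree_mul _ _
    _ ≤ 1 := by simp [totalDegree_X]

lemma poly_degree (d t : ℕ) (r : Fin t → Fin d → ZMod 2) :
    (poly d t r).totalDegree ≤ t := by
  refine le_trans (totalDegree_sub _ _) ?_
  refine max_le (by simp) ?_
  refine le_trans (totalDegree_finset_prod _ _) ?_
  calc ∑ j : Fin t, (1 - lin d (r j)).totalDegree
      ≤ ∑ j : Fin t, 1 := by
        refine Finset.sum_le_sum fun j _ => ?_
        refine le_trans (totalDegree_sub _ _) ?_
        exact max_le (by simp) (lin_degree d (r j))
    _ = t := by simp

lemma eval_poly (d t : ℕ) (x : Fin d → ZMod 2) (r : Fin t → Fin d → ZMod 2) :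
    MvPolynomial.eval x (poly d t r) = 1 - ∏ j, (1 - ∑ i, r j i * x i) := by
  simp [poly, lin]

lemma zmod2_ne_zero {a : ZMod 2} (h : a ≠ 0) : a = 1 := by revert h; revert a; decide

lemma two_mul_card_ker (d : ℕ) (x : Fin d → ZMod 2) (hx : x ≠ 0) :
    2 * ((Finset.univ.filter (fun v : Fin d → ZMod 2 => ∑ i, v i * x i = 0)).card) = 2 ^ d := by
  classical
  obtain ⟨i0, hi0⟩ : ∃ i, x i ≠ 0 := by
    by_contra h
    push_neg at h
    exact hx (funext h)
  have hx1 : x i0 = 1 := zmod2_ne_zero hi0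
  set f : (Fin d → ZMod 2) → ZMod 2 := fun v => ∑ i, v i * x i with hf
  set σ : (Fin d → ZMod 2) → (Fin d → ZMod 2) :=
    fun v => Function.update v i0 (v i0 + 1) with hσ
  have h11 : (1 : ZMod 2) + 1 = 0 := by decide
  have hσσ : ∀ v, σ (σ v) = v := by
    intro v
    simp only [hσ, Function.update_self, Function.update_idem]
    rw [add_assoc, h11, add_zero, Function.update_eq_self]
  have hfσ : ∀ v, f (σ v) = f v + 1 := by
    intro v
    simp only [hf, hσ]
    rw [← Finset.add_sum_erase _ _ (Finset.mem_univ i0),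
        ← Finset.add_sum_erase _ (fun i => v i * x i) (Finset.mem_univ i0)]
    have h1 : ∀ i ∈ Finset.univ.erase i0,
        Function.update v i0 (v i0 + 1) i * x i = v i * x i := by
      intro i hi
      rw [Function.update_of_ne (Finset.mem_erase.1 hi).1]
    rw [Finset.sum_congr rfl h1, Function.update_self, hx1]
    ring
  have hcard : (Finset.univ.filter (fun v => f v = 0)).card
      = (Finset.univ.filter (fun v => f v = 1)).card := by
    refine Finset.card_nbij' σ σ ?_ ?_ ?_ ?_
    · intro v hv
      simp only [Finset.mem_coe, Finset.mem_filter, Finset.mem_univ, true_and] at hv ⊢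
      rw [hfσ, hv, zero_add]
    · intro v hv
      simp only [Finset.mem_coe, Finset.mem_filter, Finset.mem_univ, true_and] at hv ⊢
      rw [hfσ, hv, h11]
    · intro v _; exact hσσ v
    · intro v _; exact hσσ v
  have hsplit := Finset.card_filter_add_card_filter_not
      (s := (Finset.univ : Finset (Fin d → ZMod 2))) (p := fun v => f v = 0)
  have hne : Finset.univ.filter (fun v => ¬ f v = 0)
      = Finset.univ.filter (fun v => f v = 1) := by
    refine Finset.filter_congr fun v _ => ?_
    constructor
    · exact fun h => zmod2_ne_zero h
    · intro h h0; rw [h0] at h; exact one_ne_zero h.symm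
  rw [hne, ← hcard] at hsplit
  have huniv : (Finset.univ : Finset (Fin d → ZMod 2)).card = 2 ^ d := by
    simp [Finset.card_univ]
  rw [huniv] at hsplit
  set A := (Finset.univ.filter (fun v => f v = 0)).card with hA
  omega

lemma card_pi_filter (t : ℕ) {V : Type*} [Fintype V] [DecidableEq V]
    (p : V → Prop) [DecidablePred p] :
    ((Finset.univ : Finset (Fin t → V)).filter (fun r => ∀ j, p (r j))).card
      = ((Finset.univ.filter p).card) ^ t := by
  have h : (Finset.univ : Finset (Fin t → V)).filter (fun r => ∀ j, p (r j))
      = Fintype.piFinset (fun _ => Finset.univ.filter p) := by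
    ext r
    simp [Fintype.mem_piFinset]
  rw [h, Fintype.card_piFinset]
  simp

lemma sum_fiber {α β : Type*} [Fintype α] [DecidableEq β] (f : α → β)
    (q : β → Prop) [DecidablePred q] :
    ∑ P ∈ (Finset.univ.image f).filter q, (Finset.univ.filter (fun r => f r = P)).card
      = (Finset.univ.filter (fun r => q (f r))).card := by
  have H := Finset.card_eq_sum_card_fiberwise
    (s := Finset.univ.filter (fun r => q (f r))) (t := (Finset.univ.image f).filter q)
    (f := f) (fun a ha => by
      simp only [Finset.mem_coe, Finset.mem_filter, Finset.mem_univ, true_and] at ha ⊢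
      exact ⟨Finset.mem_image_of_mem f (Finset.mem_univ a), ha⟩)
  rw [H]
  refine Finset.sum_congr rfl fun P hP => ?_
  simp only [Finset.mem_filter] at hP
  congr 1
  ext r
  simp only [Finset.mem_filter, Finset.mem_univ, true_and]
  constructor
  · intro h; exact ⟨h ▸ hP.2, h⟩
  · exact fun h => h.2

end ProbOR

/-- Razborov–Smolensky probabilistic polynomial for OR: for all `d, t`, there
is a finitely supported probability distribution over `𝔽₂`-polynomials in `d`
variables, all of total degree at most `t`, such that for every input
`x ∈ {0,1}^d` a random polynomial from the distribution agrees with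
`OR_d(x)` with probability at least `1 - 2^{-t}`. -/
theorem probabilistic_polynomial_for_OR (d t : ℕ) :
    ∃ (S : Finset (MvPolynomial (Fin d) (ZMod 2)))
      (w : MvPolynomial (Fin d) (ZMod 2) → ℝ),
      (∀ P, 0 ≤ w P) ∧
      (∀ P ∉ S, w P = 0) ∧
      (∑ P ∈ S, w P = 1) ∧
      (∀ P, w P ≠ 0 → P.totalDegree ≤ t) ∧
      (∀ x : Fin d → ZMod 2,
        1 - (1 / 2 : ℝ) ^ t ≤
          ∑ P ∈ S.filter
            (fun P => MvPolynomial.eval x P = (if x = 0 then 0 else 1)),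
            w P) := by
  classical
  set N : ℝ := ((2 : ℝ) ^ d) ^ t with hN
  have hNpos : 0 < N := by positivity
  have hcardΩ : (Finset.univ : Finset (Fin t → Fin d → ZMod 2)).card = (2 ^ d) ^ t := by
    simp [Finset.card_univ]
  refine ⟨Finset.univ.image (ProbOR.poly d t),
    fun P => ((Finset.univ.filter (fun r => ProbOR.poly d t r = P)).card : ℝ) / N,
    fun P => by positivity, ?_, ?_, ?_, ?_⟩
  · intro P hP
    have h0 : Finset.univ.filter (fun r => ProbOR.poly d t r = P) = ∅ := by
      refine Finset.filter_eq_empty_iff.2 fun r _ => fun h =>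
        hP (h ▸ Finset.mem_image_of_mem _ (Finset.mem_univ r))
    show ((Finset.univ.filter (fun r => ProbOR.poly d t r = P)).card : ℝ) / N = 0
    rw [h0]; simp
  · rw [← Finset.sum_div, div_eq_one_iff_eq hNpos.ne', ← Nat.cast_sum,
      ← Finset.card_eq_sum_card_image (ProbOR.poly d t) Finset.univ, hcardΩ]
    push_cast; rfl
  · intro P hP
    obtain ⟨r, -, hr⟩ : ∃ r ∈ Finset.univ, ProbOR.poly d t r = P := by
      by_contra h
      push_neg at h
      apply hP
      show ((Finset.univ.filter (fun r => ProbOR.poly d t r = P)).card : ℝ) / N = 0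
      rw [Finset.filter_eq_empty_iff.2 h]
      simp
    exact hr ▸ ProbOR.poly_degree d t r
  · intro x
    rw [← Finset.sum_div]
    by_cases hx : x = 0
    · subst hx
      rw [if_pos rfl]
      have hall : (Finset.univ.image (ProbOR.poly d t)).filter
          (fun P => MvPolynomial.eval (0 : Fin d → ZMod 2) P = 0)
          = Finset.univ.image (ProbOR.poly d t) := by
        refine Finset.filter_eq_self.2 fun P hP => ?_
        obtain ⟨r, -, hr⟩ := Finset.mem_image.1 hP
        subst hr
        rw [ProbOR.eval_poly]
        simp
      rw [hall, ← Nat.cast_sum,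
        ← Finset.card_eq_sum_card_image (ProbOR.poly d t) Finset.univ, hcardΩ]
      have h1 : (((2 ^ d) ^ t : ℕ) : ℝ) / N = 1 := by
        rw [div_eq_one_iff_eq hNpos.ne']
        push_cast; rfl
      rw [h1]
      have : (0:ℝ) ≤ (1/2:ℝ)^t := by positivity
      linarith
    · rw [if_neg hx, ← Nat.cast_sum, ProbOR.sum_fiber (ProbOR.poly d t)
        (fun P => MvPolynomial.eval x P = 1)]
      have hzm : ∀ a : ZMod 2, a ≠ 0 ↔ a = 1 := by decide
      have key : ∀ r : Fin t → Fin d → ZMod 2,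
          (MvPolynomial.eval x (ProbOR.poly d t r) = 1)
            ↔ ¬ (∀ j, ∑ i, r j i * x i = 0) := by
        intro r
        rw [ProbOR.eval_poly, sub_eq_self, Finset.prod_eq_zero_iff]
        push_neg
        constructor
        · rintro ⟨j, -, hj⟩
          exact ⟨j, fun h0 => by rw [h0, sub_zero] at hj; exact one_ne_zero hj⟩
        · rintro ⟨j, hj⟩
          exact ⟨j, Finset.mem_univ j, by rw [(hzm _).1 hj, sub_self]⟩
      have hfilter : Finset.univ.filter
            (fun r => MvPolynomial.eval x (ProbOR.poly d t r) = 1)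
          = Finset.univ.filter
            (fun r : Fin t → Fin d → ZMod 2 => ¬ ∀ j, ∑ i, r j i * x i = 0) :=
        Finset.filter_congr fun r _ => key r
      rw [hfilter]
      have hsplit := Finset.card_filter_add_card_filter_not
        (s := (Finset.univ : Finset (Fin t → Fin d → ZMod 2)))
        (p := fun r => ∀ j, ∑ i, r j i * x i = 0)
      rw [hcardΩ, ProbOR.card_pi_filter t (fun v : Fin d → ZMod 2 => ∑ i, v i * x i = 0)]
        at hsplit
      have hker := ProbOR.two_mul_card_ker d x hx
      set A := (Finset.univ.filter (fun v : Fin d → ZMod 2 => ∑ i, v i * x i = 0)).card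
        with hA
      set G := (Finset.univ.filter
        (fun r : Fin t → Fin d → ZMod 2 => ¬ ∀ j, ∑ i, r j i * x i = 0)).card with hG
      -- real arithmetic
      have haR : (2 : ℝ) * (A : ℝ) = 2 ^ d := by exact_mod_cast hker
      have hGR : (G : ℝ) = N - (A : ℝ) ^ t := by
        have : ((A ^ t + G : ℕ) : ℝ) = (((2 ^ d) ^ t : ℕ) : ℝ) := by exact_mod_cast hsplit
        push_cast at this
        rw [hN]
        linarith
      rw [hGR]
      have hAval : (A : ℝ) = 2 ^ d / 2 := by linarith
      have hbad : (A : ℝ) ^ t = N * (1 / 2) ^ t := by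
        rw [hN, ← mul_pow, hAval]
        congr 1
        ring
      rw [hbad, sub_div, div_self hNpos.ne', mul_comm, mul_div_assoc,
        div_self hNpos.ne', mul_one]
end

section
/- For all d, t ∈ ℕ, there exists a finitely supported probability distribution μ over matrices M with rows and columns indexed by {0,1}^d and entries in 𝔽₂ = ZMod 2 such that every matrix in the support of μ has rank (over 𝔽₂) at most ∑_{i=0}^{t} C(d, i), and for every pair x, y ∈ {0,1}^d, the probability over M ∼ μ that M_{x,y} = DISJ(x,y) is at least 1 − 2^{-t}, where DISJ(x,y) ∈ 𝔽₂ equals 1 if ∑_{i=1}^{d} x_i y_i = 0 (as an integer) and equals 0 otherwise. -/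
open Finset Submodule Matrix

namespace ProbRankDisjAux

variable {d : ℕ}

lemma zmod2_idem : ∀ a : ZMod 2, a * a = a := by decide

lemma nat_half (Z W : ℕ) (h : Z + Z = W * 2) : Z = W := by omega

lemma zmod2_add_self : ∀ a b : ZMod 2, a + b + b = a := by decide

lemma mul_mono (x : Fin d → ZMod 2) (i : Fin d) (A : Finset (Fin d)) :
    x i * ∏ i' ∈ A, x i' = ∏ i' ∈ insert i A, x i' := by
  by_cases h : i ∈ A
  · rw [Finset.insert_eq_self.2 h, ← Finset.mul_prod_erase A _ h, ← mul_assoc, zmod2_idem]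
  · rw [Finset.prod_insert h]

/-- Set of monomial functions of degree at most `k`. -/
def G (d k : ℕ) : Set ((Fin d → ZMod 2) → ZMod 2) :=
  (fun A : Finset (Fin d) => fun x => ∏ i ∈ A, x i) '' {A | A.card ≤ k}

lemma mul_linear_mem (k : ℕ) (a y : Fin d → ZMod 2)
    (g : (Fin d → ZMod 2) → ZMod 2) (hg : g ∈ span (ZMod 2) (G d k)) :
    (fun x : Fin d → ZMod 2 => (1 + ∑ i, a i * (x i * y i)) * g x)
      ∈ span (ZMod 2) (G d (k + 1)) := by
  induction hg using Submodule.span_induction with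
  | mem g hgmem =>
    obtain ⟨A, hA, rfl⟩ := hgmem
    have key : (fun x : Fin d → ZMod 2 => (1 + ∑ i, a i * (x i * y i)) * ∏ i' ∈ A, x i')
        = (fun x : Fin d → ZMod 2 => ∏ i' ∈ A, x i')
          + ∑ i : Fin d, (a i * y i) •
              (fun x : Fin d → ZMod 2 => ∏ i' ∈ insert i A, x i') := by
      funext x
      simp only [Pi.add_apply, Finset.sum_apply, Pi.smul_apply, smul_eq_mul]
      rw [add_mul, one_mul, Finset.sum_mul]
      congr 1
      refine Finset.sum_congr rfl fun i _ => ?_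
      rw [← mul_mono x i A]; ring
    rw [key]
    refine Submodule.add_mem _ (Submodule.subset_span ⟨A, hA.trans (Nat.le_succ k), rfl⟩) ?_
    refine Submodule.sum_mem _ fun i _ =>
      Submodule.smul_mem _ _ (Submodule.subset_span ⟨insert i A, ?_, rfl⟩)
    exact (Finset.card_insert_le i A).trans (Nat.add_le_add_right hA 1)
  | zero =>
    have : (fun x : Fin d → ZMod 2 =>
          (1 + ∑ i, a i * (x i * y i)) * (0 : (Fin d → ZMod 2) → ZMod 2) x)
        = 0 := by funext x; simp
    rw [this]; exact Submodule.zero_mem _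
  | add g h _ _ ihg ihh =>
    have : (fun x : Fin d → ZMod 2 => (1 + ∑ i, a i * (x i * y i)) * (g + h) x)
        = (fun x : Fin d → ZMod 2 => (1 + ∑ i, a i * (x i * y i)) * g x)
          + fun x : Fin d → ZMod 2 => (1 + ∑ i, a i * (x i * y i)) * h x := by
      funext x; simp [mul_add]
    rw [this]; exact Submodule.add_mem _ ihg ihh
  | smul c g _ ih =>
    have : (fun x : Fin d → ZMod 2 => (1 + ∑ i, a i * (x i * y i)) * (c • g) x)
        = c • fun x : Fin d → ZMod 2 => (1 + ∑ i, a i * (x i * y i)) * g x := by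
      funext x; simp only [Pi.smul_apply, smul_eq_mul]; ring
    rw [this]; exact Submodule.smul_mem _ _ ih

lemma prod_mem {T : ℕ} (s : Fin T → Fin d → ZMod 2) (y : Fin d → ZMod 2) (J : Finset (Fin T)) :
    (fun x => ∏ j ∈ J, (1 + ∑ i, s j i * (x i * y i))) ∈ span (ZMod 2) (G d J.card) := by
  classical
  induction J using Finset.induction_on with
  | empty =>
    have : (fun x : Fin d → ZMod 2 =>
          ∏ j ∈ (∅ : Finset (Fin T)), (1 + ∑ i, s j i * (x i * y i)))
        = fun x => ∏ i ∈ (∅ : Finset (Fin d)), x i := by funext x; simp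
    rw [this]
    exact Submodule.subset_span ⟨∅, by simp, rfl⟩
  | @insert j J hj ih =>
    rw [Finset.card_insert_of_notMem hj]
    have : (fun x : Fin d → ZMod 2 =>
          ∏ j' ∈ insert j J, (1 + ∑ i, s j' i * (x i * y i)))
        = fun x => (1 + ∑ i, s j i * (x i * y i))
            * ∏ j' ∈ J, (1 + ∑ i, s j' i * (x i * y i)) := by
      funext x; rw [Finset.prod_insert hj]
    rw [this]
    exact mul_linear_mem _ _ _ _ ih

lemma card_T (d T : ℕ) :
    (Finset.univ.filter fun A : Finset (Fin d) => A.card ≤ T).card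
      = ∑ i ∈ Finset.range (T + 1), Nat.choose d i := by
  classical
  rw [Finset.card_eq_sum_card_fiberwise
    (f := Finset.card) (t := Finset.range (T + 1))
    (fun A hA => by simp only [Finset.mem_coe, Finset.mem_filter] at hA; simp; omega)]
  refine Finset.sum_congr rfl fun i hi => ?_
  rw [Finset.mem_range] at hi
  have : ((Finset.univ.filter fun A : Finset (Fin d) => A.card ≤ T).filter
        fun A => A.card = i) = Finset.powersetCard i Finset.univ := by
    ext A
    simp only [Finset.mem_filter, Finset.mem_univ, true_and, Finset.mem_powersetCard,
      Finset.subset_univ]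
    omega
  rw [this, Finset.card_powersetCard]
  simp

lemma rank_le_aux {T : ℕ} (s : Fin T → Fin d → ZMod 2) :
    (Matrix.of fun x y : Fin d → ZMod 2 => ∏ j, (1 + ∑ i, s j i * (x i * y i))).rank
      ≤ ∑ i ∈ Finset.range (T + 1), Nat.choose d i := by
  classical
  set M : Matrix (Fin d → ZMod 2) (Fin d → ZMod 2) (ZMod 2) :=
    Matrix.of (fun x y : Fin d → ZMod 2 => ∏ j, (1 + ∑ i, s j i * (x i * y i))) with hM
  set B : Finset ((Fin d → ZMod 2) → ZMod 2) :=
    (Finset.univ.filter fun A : Finset (Fin d) => A.card ≤ T).image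
      (fun A => fun x => ∏ i ∈ A, x i) with hB
  have hGB : G d T = ↑B := by
    ext g
    simp only [G, Set.mem_image, Set.mem_setOf_eq, hB, Finset.coe_image, Finset.coe_filter,
      Finset.mem_univ, true_and]
  have hle : span (ZMod 2) (Set.range Mᵀ) ≤ span (ZMod 2) (↑B : Set ((Fin d → ZMod 2) → ZMod 2)) := by
    rw [span_le]
    rintro _ ⟨y, rfl⟩
    rw [← hGB]
    have hcol : Mᵀ y = fun x => ∏ j ∈ Finset.univ, (1 + ∑ i, s j i * (x i * y i)) := rfl
    rw [hcol]
    have h := prod_mem s y (Finset.univ : Finset (Fin T))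
    rwa [Finset.card_univ, Fintype.card_fin] at h
  rw [Matrix.rank_eq_finrank_span_cols]
  calc Module.finrank (ZMod 2) (span (ZMod 2) (Set.range Mᵀ))
      ≤ Module.finrank (ZMod 2) (span (ZMod 2) (↑B : Set ((Fin d → ZMod 2) → ZMod 2))) :=
        Submodule.finrank_mono hle
    _ ≤ B.card := finrank_span_finset_le_card B
    _ ≤ (Finset.univ.filter fun A : Finset (Fin d) => A.card ≤ T).card :=
        Finset.card_image_le
    _ = ∑ i ∈ Finset.range (T + 1), Nat.choose d i := card_T d T

lemma card_zero_sum (c : Fin d → ZMod 2) (i0 : Fin d) (h : c i0 = 1) :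
    (Finset.univ.filter fun v : Fin d → ZMod 2 => ∑ i, v i * c i = 0).card = 2 ^ (d - 1) := by
  classical
  set e : Fin d → ZMod 2 := fun i => if i = i0 then 1 else 0 with he
  have hsum : ∀ v : Fin d → ZMod 2, ∑ i, (v i + e i) * c i = (∑ i, v i * c i) + 1 := by
    intro v
    simp only [add_mul, Finset.sum_add_distrib]
    congr 1
    rw [show ∑ i, e i * c i = (1 : ZMod 2) from ?_]
    simp only [he, ite_mul, one_mul, zero_mul]
    rw [Finset.sum_ite_eq' Finset.univ i0 c]
    simp [h]
  have hne : ∀ a : ZMod 2, a ≠ 0 → a = 1 := by decide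
  have hZO : (Finset.univ.filter fun v : Fin d → ZMod 2 => ∑ i, v i * c i = 0).card
      = (Finset.univ.filter fun v : Fin d → ZMod 2 => ¬ (∑ i, v i * c i = 0)).card := by
    refine Finset.card_bij' (fun v _ => v + e) (fun v _ => v + e) ?_ ?_ ?_ ?_
    · intro v hv
      simp only [Finset.mem_filter, Finset.mem_univ, true_and] at hv ⊢
      rw [show ∑ i, (v + e) i * c i = (∑ i, v i * c i) + 1 from hsum v, hv]
      decide
    · intro v hv
      simp only [Finset.mem_filter, Finset.mem_univ, true_and] at hv ⊢
      rw [show ∑ i, (v + e) i * c i = (∑ i, v i * c i) + 1 from hsum v, hne _ hv]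
      decide
    · intro v _; funext i; exact zmod2_add_self _ _
    · intro v _; funext i; exact zmod2_add_self _ _
  have hsplit : (Finset.univ.filter fun v : Fin d → ZMod 2 => ∑ i, v i * c i = 0).card
      + (Finset.univ.filter fun v : Fin d → ZMod 2 => ¬ (∑ i, v i * c i = 0)).card
      = (Finset.univ : Finset (Fin d → ZMod 2)).card :=
    Finset.card_filter_add_card_filter_not _
  have hcard : (Finset.univ : Finset (Fin d → ZMod 2)).card = 2 ^ d := by
    rw [Finset.card_univ, Fintype.card_fun]
    simp
  have hd : 0 < d := i0.pos
  have h2 : 2 ^ d = 2 ^ (d - 1) * 2 := by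
    rw [← pow_succ, Nat.sub_add_cancel hd]
  rw [hcard, ← hZO, h2] at hsplit
  exact nat_half _ _ hsplit

end ProbRankDisjAux

open ProbRankDisjAux in
/-- The Set-Disjointness matrix has low probabilistic rank: for all `d, t`,
there is a finitely supported probability distribution over
`2^d × 2^d` matrices over `𝔽₂`, each of rank at most `∑_{i=0}^{t} C(d,i)`,
such that for every pair `x, y ∈ {0,1}^d` a random matrix from the
distribution agrees with `DISJ(x,y)` at entry `(x,y)` with probability at
least `1 - 2^{-t}`. -/
theorem probabilistic_rank_of_disjointness (d t : ℕ) :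
    ∃ (S : Finset (Matrix (Fin d → ZMod 2) (Fin d → ZMod 2) (ZMod 2)))
      (w : Matrix (Fin d → ZMod 2) (Fin d → ZMod 2) (ZMod 2) → ℝ),
      (∀ M, 0 ≤ w M) ∧
      (∀ M ∉ S, w M = 0) ∧
      (∑ M ∈ S, w M = 1) ∧
      (∀ M, w M ≠ 0 → M.rank ≤ ∑ i ∈ Finset.range (t + 1), Nat.choose d i) ∧
      (∀ x y : Fin d → ZMod 2,
        1 - (1 / 2 : ℝ) ^ t ≤
          ∑ M ∈ S.filter
            (fun M => M x y = (if ∀ i, x i * y i = 0 then 1 else 0)),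
            w M) := by
  classical
  set f : (Fin t → Fin d → ZMod 2) → Matrix (Fin d → ZMod 2) (Fin d → ZMod 2) (ZMod 2) :=
    fun s => Matrix.of fun x y => ∏ j, (1 + ∑ i, s j i * (x i * y i)) with hf
  set N : ℝ := ((2 : ℝ) ^ d) ^ t with hNdef
  have hNpos : 0 < N := by positivity
  have hcardΩ : (Finset.univ : Finset (Fin t → Fin d → ZMod 2)).card = (2 ^ d) ^ t := by
    rw [Finset.card_univ, Fintype.card_fun, Fintype.card_fun]
    simp
  refine ⟨Finset.univ.image f,
    fun M => ((Finset.univ.filter fun s => f s = M).card : ℝ) / N, ?_, ?_, ?_, ?_, ?_⟩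
  · intro M; dsimp only; positivity
  · intro M hM
    dsimp only
    have : (Finset.univ.filter fun s => f s = M) = ∅ := by
      refine Finset.filter_eq_empty_iff.2 fun s _ hs => ?_
      exact hM (hs ▸ Finset.mem_image_of_mem f (Finset.mem_univ s))
    rw [this]; simp
  · dsimp only
    rw [← Finset.sum_div]
    rw [show ∑ M ∈ Finset.univ.image f,
        ((Finset.univ.filter fun s => f s = M).card : ℝ)
        = ((Finset.univ : Finset (Fin t → Fin d → ZMod 2)).card : ℝ) from ?_]
    · rw [hcardΩ, hNdef]; push_cast; rw [div_self (by positivity)]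
    · rw [Finset.card_eq_sum_card_fiberwise
        (f := f) (t := Finset.univ.image f)
        (fun s _ => Finset.mem_image_of_mem f (Finset.mem_univ s))]
      push_cast; rfl
  · intro M hM
    dsimp only at hM
    have : (Finset.univ.filter fun s => f s = M).Nonempty := by
      rw [Finset.nonempty_iff_ne_empty]
      intro hempty
      apply hM
      rw [hempty]; simp
    obtain ⟨s, hs⟩ := this
    rw [Finset.mem_filter] at hs
    rw [← hs.2]
    exact rank_le_aux s
  · intro x y
    dsimp only
    set P : Matrix (Fin d → ZMod 2) (Fin d → ZMod 2) (ZMod 2) → Prop :=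
      fun M => M x y = (if ∀ i, x i * y i = 0 then 1 else 0) with hP
    have hsum_eq : ∑ M ∈ (Finset.univ.image f).filter P,
        ((Finset.univ.filter fun s => f s = M).card : ℝ) / N
        = ((Finset.univ.filter fun s => P (f s)).card : ℝ) / N := by
      rw [← Finset.sum_div]
      congr 1
      rw [Finset.card_eq_sum_card_fiberwise
        (f := f) (t := (Finset.univ.image f).filter P)
        (fun s hs => by
          rw [Finset.mem_coe, Finset.mem_filter] at hs ⊢
          exact ⟨Finset.mem_image_of_mem f (Finset.mem_univ s), hs.2⟩)]
      push_cast
      refine Finset.sum_congr rfl fun M hM => ?_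
      rw [Finset.mem_filter] at hM
      have hfib : (Finset.univ.filter fun s => f s = M)
          = ((Finset.univ.filter fun s => P (f s)).filter fun s => f s = M) := by
        ext s
        simp only [Finset.mem_filter, Finset.mem_univ, true_and]
        constructor
        · intro h; exact ⟨h ▸ hM.2, h⟩
        · exact fun h => h.2
      rw [hfib]
    rw [hsum_eq]
    by_cases hdisj : ∀ i, x i * y i = 0
    · have : (Finset.univ.filter fun s => P (f s)) = Finset.univ := by
        refine Finset.filter_true_of_mem fun s _ => ?_
        simp only [hP, hf, if_pos hdisj, Matrix.of_apply]
        have : ∀ j : Fin t, (1 : ZMod 2) + ∑ i, s j i * (x i * y i) = 1 := by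
          intro j
          rw [show ∑ i, s j i * (x i * y i) = 0 from ?_]
          · ring
          · refine Finset.sum_eq_zero fun i _ => by rw [hdisj i, mul_zero]
        simp [this]
      rw [this, hcardΩ]
      have h1 : (((2:ℕ) ^ d) ^ t : ℝ) / N = 1 := by
        rw [hNdef]; push_cast; rw [div_self (by positivity)]
      push_cast at h1 ⊢
      rw [h1]
      have : (0:ℝ) ≤ (1/2:ℝ) ^ t := by positivity
      linarith
    · push_neg at hdisj
      obtain ⟨i0, hi0⟩ := hdisj
      have hne1 : ∀ a : ZMod 2, a ≠ 0 → a = 1 := by decide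
      have hc : x i0 * y i0 = 1 := hne1 _ hi0
      have hite : (if ∀ i, x i * y i = 0 then (1:ZMod 2) else 0) = 0 := by
        rw [if_neg]; push_neg; exact ⟨i0, hi0⟩
      -- count the bad seeds
      have hbad : (Finset.univ.filter fun s : Fin t → Fin d → ZMod 2
            => ¬ (P (f s))).card = (2 ^ (d - 1)) ^ t := by
        have hstep : (Finset.univ.filter fun s : Fin t → Fin d → ZMod 2 => ¬ (P (f s)))
            = Fintype.piFinset fun _ : Fin t =>
                Finset.univ.filter fun v : Fin d → ZMod 2 => ∑ i, v i * (x i * y i) = 0 := by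
          ext s
          simp only [Finset.mem_filter, Finset.mem_univ, true_and, Fintype.mem_piFinset, hP,
            hf, Matrix.of_apply, hite]
          rw [show ((∏ j, ((1:ZMod 2) + ∑ i, s j i * (x i * y i))) = 0) ↔
              ¬ (∀ j, ∑ i, s j i * (x i * y i) = 0) from ?_]
          · tauto
          constructor
          · intro h hall
            rw [Finset.prod_eq_one fun j _ => by rw [hall j]; ring] at h
            exact one_ne_zero h
          · intro h
            by_contra hprod
            apply h
            intro j
            have := Finset.prod_ne_zero_iff.1 hprod j (Finset.mem_univ j)
            have h1 : (1:ZMod 2) + ∑ i, s j i * (x i * y i) = 1 := hne1 _ this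
            have : ∀ a : ZMod 2, 1 + a = 1 → a = 0 := by decide
            exact this _ h1
        rw [hstep, Fintype.card_piFinset]
        rw [Finset.prod_const, Finset.card_univ, Fintype.card_fin]
        rw [card_zero_sum (fun i => x i * y i) i0 hc]
      have hsplit : (Finset.univ.filter fun s => P (f s)).card
          + (Finset.univ.filter fun s => ¬ (P (f s))).card
          = (Finset.univ : Finset (Fin t → Fin d → ZMod 2)).card :=
        Finset.card_filter_add_card_filter_not _
      have hgood : ((Finset.univ.filter fun s => P (f s)).card : ℝ)
          = N - ((2:ℝ) ^ (d - 1)) ^ t := by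
        have : (Finset.univ.filter fun s => P (f s)).card
            = (2 ^ d) ^ t - (2 ^ (d - 1)) ^ t := by
          rw [hbad, hcardΩ] at hsplit
          exact Nat.eq_sub_of_add_eq hsplit
        rw [this, hNdef]
        have hle : (2 ^ (d-1):ℕ) ^ t ≤ ((2:ℕ) ^ d) ^ t :=
          Nat.pow_le_pow_left (Nat.pow_le_pow_right (by norm_num) (Nat.sub_le d 1)) t
        push_cast [Nat.cast_sub hle]
        try ring
      rw [hgood]
      have hd : 0 < d := i0.pos
      have h2 : ((2:ℝ) ^ (d - 1)) * 2 = 2 ^ d := by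
        rw [← pow_succ, Nat.sub_add_cancel hd]
      have hfrac : ((2:ℝ) ^ (d - 1)) ^ t / N = (1/2:ℝ) ^ t := by
        rw [hNdef, ← div_pow]
        congr 1
        rw [eq_div_iff (by norm_num : (2:ℝ) ≠ 0)] at *
        field_simp
        linarith [h2]
      rw [sub_div, hfrac, div_self (ne_of_gt hNpos)]
end

section
/- Let m, m' ∈ ℕ and let W be an m × m' matrix over 𝔽₂ = ZMod 2 with W ≠ 0. If u is drawn uniformly at random from 𝔽₂^m and v is drawn uniformly and independently from 𝔽₂^{m'}, then the probability that uᵀ W v = 1 is at least 1/4. -/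
open Finset

/-- If a linear functional `u ↦ ∑ k, u k * w k` over `𝔽₂` has nonzero `w`,
then at least half of all `u` satisfy the equation `= 1`. -/
private lemma flip_count {m : ℕ} (w : Fin m → ZMod 2) (hw : w ≠ 0) :
    2 ^ m ≤ 2 * (Finset.univ.filter
      (fun u : Fin m → ZMod 2 => (∑ k, u k * w k) = 1)).card := by
  classical
  obtain ⟨k0, hk0⟩ : ∃ k, w k ≠ 0 := by
    by_contra h; push_neg at h; exact hw (funext h)
  have hz : ∀ x : ZMod 2, x ≠ 0 → x = 1 := by decide
  have hk1 : w k0 = 1 := hz _ hk0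
  set s1 := Finset.univ.filter
      (fun u : Fin m → ZMod 2 => (∑ k, u k * w k) = 1) with hs1
  set s0 := Finset.univ.filter
      (fun u : Fin m → ZMod 2 => ¬ ((∑ k, u k * w k) = 1)) with hs0
  have hsum : ∀ u : Fin m → ZMod 2,
      (∑ k, (u + (Pi.single k0 1 : Fin m → ZMod 2)) k * w k) = (∑ k, u k * w k) + 1 := by
    intro u
    have h1 : (∑ k, (u k + (Pi.single k0 1 : Fin m → ZMod 2) k) * w k)
        = (∑ k, u k * w k) + ∑ k, (Pi.single k0 1 : Fin m → ZMod 2) k * w k := by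
      rw [← Finset.sum_add_distrib]
      exact Finset.sum_congr rfl fun k _ => by ring
    have h2 : (∑ k, (Pi.single k0 1 : Fin m → ZMod 2) k * w k) = w k0 := by
      rw [Finset.sum_eq_single k0]
      · simp
      · intro b _ hb; simp [Pi.single_eq_of_ne hb]
      · simp
    simpa [Pi.add_apply, h2, hk1] using h1
  have hcard : s0.card ≤ s1.card := by
    apply Finset.card_le_card_of_injOn (fun u => u + (Pi.single k0 1 : Fin m → ZMod 2))
    · intro u hu
      simp only [hs0, Finset.mem_coe, Finset.mem_filter, Finset.mem_univ, true_and] at hu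
      simp only [hs1, Finset.mem_coe, Finset.mem_filter, Finset.mem_univ, true_and]
      rw [hsum u]
      have h0 : (∑ k, u k * w k) = 0 := by
        rcases (by decide : ∀ x : ZMod 2, x = 0 ∨ x = 1) (∑ k, u k * w k) with h | h
        · exact h
        · exact absurd h hu
      rw [h0, zero_add]
    · intro a _ b _ h
      simpa using add_right_cancel h
  have hpart : s1.card + s0.card = 2 ^ m := by
    have h := Finset.card_filter_add_card_filter_not
      (s := (Finset.univ : Finset (Fin m → ZMod 2)))
      (p := fun u => (∑ k, u k * w k) = 1)
    rw [Finset.card_univ] at h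
    simpa [hs1, hs0, Fintype.card_fun, ZMod.card] using h
  omega

/-- Random bilinear test over `𝔽₂`: if `W` is a nonzero `m × m'` matrix over
`𝔽₂` and `u, v` are uniform independent random vectors, then
`Pr[uᵀ W v = 1] ≥ 1/4`, i.e. the number of pairs `(u, v)` with
`∑_k ∑_ℓ u_k W_{k,ℓ} v_ℓ = 1` is at least a quarter of all `2^{m+m'}` pairs. -/
theorem bilinear_test_nonzero_matrix (m m' : ℕ)
    (W : Matrix (Fin m) (Fin m') (ZMod 2)) (hW : W ≠ 0) :
    2 ^ (m + m') ≤
      4 * ((Finset.univ.filter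
        (fun p : (Fin m → ZMod 2) × (Fin m' → ZMod 2) =>
          (∑ k : Fin m, ∑ l : Fin m', p.1 k * W k l * p.2 l) = 1)).card) := by
  classical
  set g : (Fin m' → ZMod 2) → (Fin m → ZMod 2) := fun v k => ∑ l, W k l * v l with hg
  have hrw : ∀ (u : Fin m → ZMod 2) (v : Fin m' → ZMod 2),
      (∑ k, ∑ l, u k * W k l * v l) = ∑ k, u k * g v k := by
    intro u v
    refine Finset.sum_congr rfl fun k _ => ?_
    rw [hg, Finset.mul_sum]
    exact Finset.sum_congr rfl fun l _ => by ring
  -- decompose the pair count as a sum over v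
  have hN : ((Finset.univ.filter
        (fun p : (Fin m → ZMod 2) × (Fin m' → ZMod 2) =>
          (∑ k : Fin m, ∑ l : Fin m', p.1 k * W k l * p.2 l) = 1)).card)
      = ∑ v : Fin m' → ZMod 2,
          (Finset.univ.filter
            (fun u : Fin m → ZMod 2 => (∑ k, u k * g v k) = 1)).card := by
    rw [Finset.card_filter, Fintype.sum_prod_type, Finset.sum_comm]
    refine Finset.sum_congr rfl fun v _ => ?_
    rw [Finset.card_filter]
    exact Finset.sum_congr rfl fun u _ => by rw [hrw]
  -- g is additive
  have hgadd : ∀ v v' : Fin m' → ZMod 2, g (v + v') = g v + g v' := by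
    intro v v'
    funext k
    simp only [hg, Pi.add_apply, ← Finset.sum_add_distrib]
    exact Finset.sum_congr rfl fun l _ => by ring
  -- choose v0 with g v0 ≠ 0
  obtain ⟨k1, l1, hkl⟩ : ∃ k l, W k l ≠ 0 := by
    by_contra h; push_neg at h
    exact hW (by ext k l; simp [h k l])
  have hv0 : g (Pi.single l1 1 : Fin m' → ZMod 2) ≠ 0 := by
    intro h
    apply hkl
    have := congrFun h k1
    rw [hg] at this
    simp only [Pi.zero_apply] at this
    rw [Finset.sum_eq_single l1] at this
    · simpa using this
    · intro b _ hb; simp [Pi.single_eq_of_ne hb]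
    · simp
  set v0 : Fin m' → ZMod 2 := Pi.single l1 1 with hv0def
  -- at least half of v's have g v ≠ 0
  set tnon := Finset.univ.filter (fun v : Fin m' → ZMod 2 => g v ≠ 0) with htnon
  set tker := Finset.univ.filter (fun v : Fin m' → ZMod 2 => ¬ (g v ≠ 0)) with htker
  have hcardv : tker.card ≤ tnon.card := by
    apply Finset.card_le_card_of_injOn (fun v => v + v0)
    · intro v hv
      simp only [htker, Finset.mem_coe, Finset.mem_filter, Finset.mem_univ, true_and, not_not] at hv
      simp only [htnon, Finset.mem_coe, Finset.mem_filter, Finset.mem_univ, true_and]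
      rw [hgadd, hv, zero_add]
      exact hv0
    · intro a _ b _ h
      simpa using add_right_cancel h
  have hpartv : tnon.card + tker.card = 2 ^ m' := by
    have h := Finset.card_filter_add_card_filter_not
      (s := (Finset.univ : Finset (Fin m' → ZMod 2)))
      (p := fun v => g v ≠ 0)
    rw [Finset.card_univ] at h
    simpa [htnon, htker, Fintype.card_fun, ZMod.card] using h
  have htnon_ge : 2 ^ m' ≤ 2 * tnon.card := by
    rw [← hpartv, two_mul]; exact Nat.add_le_add_left hcardv _
  -- each v in tnon contributes at least 2^m / 2
  have hbound : ∀ v ∈ tnon, 2 ^ m ≤ 2 * (Finset.univ.filter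
      (fun u : Fin m → ZMod 2 => (∑ k, u k * g v k) = 1)).card := by
    intro v hv
    simp only [htnon, Finset.mem_filter, Finset.mem_univ, true_and] at hv
    exact flip_count (g v) hv
  -- combine
  have hsum_ge : tnon.card * 2 ^ m ≤ 2 * ∑ v : Fin m' → ZMod 2,
      (Finset.univ.filter
        (fun u : Fin m → ZMod 2 => (∑ k, u k * g v k) = 1)).card := by
    calc tnon.card * 2 ^ m = ∑ _v ∈ tnon, 2 ^ m := by
          rw [Finset.sum_const, smul_eq_mul]
      _ ≤ ∑ v ∈ tnon, 2 * (Finset.univ.filter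
            (fun u : Fin m → ZMod 2 => (∑ k, u k * g v k) = 1)).card :=
          Finset.sum_le_sum hbound
      _ = 2 * ∑ v ∈ tnon, (Finset.univ.filter
            (fun u : Fin m → ZMod 2 => (∑ k, u k * g v k) = 1)).card := by
          rw [Finset.mul_sum]
      _ ≤ 2 * ∑ v : Fin m' → ZMod 2, (Finset.univ.filter
            (fun u : Fin m → ZMod 2 => (∑ k, u k * g v k) = 1)).card := by
          apply Nat.mul_le_mul_left
          exact Finset.sum_le_sum_of_subset (Finset.subset_univ _)
  rw [hN, pow_add]
  calc 2 ^ m * 2 ^ m' ≤ 2 ^ m * (2 * tnon.card) :=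
        Nat.mul_le_mul_left _ htnon_ge
    _ = 2 * (tnon.card * 2 ^ m) := by ring
    _ ≤ 2 * (2 * ∑ v : Fin m' → ZMod 2, (Finset.univ.filter
          (fun u : Fin m → ZMod 2 => (∑ k, u k * g v k) = 1)).card) :=
        Nat.mul_le_mul_left _ hsum_ge
    _ = 4 * ∑ v : Fin m' → ZMod 2, (Finset.univ.filter
          (fun u : Fin m → ZMod 2 => (∑ k, u k * g v k) = 1)).card := by ring
end

section
/- Let w ∈ ℕ, let ε ∈ [0,1], let Ω be a finite probability space, let A and B be finite sets, let F : A × B → {0, 1, ⊥} be a partial function, and let u : Ω × A → {0,1}^w and v : Ω × B → {0,1}^w be random Boolean vector families. Suppose that for every pair (a,b) with F(a,b) = 1, the probability over ω ∈ Ω that ⟨u(ω,a), v(ω,b)⟩ > 0 is at least 1 − ε, and for every pair (a,b) with F(a,b) = 0, the probability over ω that ⟨u(ω,a), v(ω,b)⟩ > 0 is at most ε. Assume the promise that either (i) there exists (a,b) ∈ A × B with F(a,b) = 1, or (ii) F(a,b) = 0 for every (a,b) ∈ A × B. Then with probability at least 1 − ε·|A|·|B| over ω ∈ Ω, the following holds: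 ⟨∑_{a ∈ A} u(ω,a), ∑_{b ∈ B} v(ω,b)⟩ > 0 if and only if case (i) holds. -/
open scoped Classical

/-- Correctness core of the reduction from an Arthur–Merlin communication
protocol to `F`-Satisfying-Pair: if for every 1-pair (resp. 0-pair) of `F` the
indicator vectors of Alice and Bob have positive inner product with
probability at least `1 - ε` (resp. at most `ε`) over the random challenge
`ω`, and the promise holds, then with probability at least
`1 - ε·|A|·|B|` the aggregated inner product is positive iff some pair
satisfies `F(a,b) = 1`. Here `F a b = some true`/`some false`/`none` encodes
`F(a,b) = 1`/`0`/`⊥`. -/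
theorem am_satisfying_pair_correctness
    (w : ℕ) (ε : ℝ) (hε0 : 0 ≤ ε) (hε1 : ε ≤ 1)
    (Ω : Type*) [Fintype Ω] (Pr : Ω → ℝ)
    (hPr0 : ∀ ω, 0 ≤ Pr ω) (hPr1 : ∑ ω : Ω, Pr ω = 1)
    (A B : Type*) [Fintype A] [Fintype B]
    (F : A → B → Option Bool)
    (u : Ω → A → Fin w → Bool) (v : Ω → B → Fin w → Bool)
    (hyes : ∀ a b, F a b = some true →
      1 - ε ≤ ∑ ω ∈ Finset.univ.filter (fun ω : Ω =>
        0 < ∑ j : Fin w,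
          (if u ω a j then (1 : ℝ) else 0) * (if v ω b j then (1 : ℝ) else 0)),
        Pr ω)
    (hno : ∀ a b, F a b = some false →
      (∑ ω ∈ Finset.univ.filter (fun ω : Ω =>
        0 < ∑ j : Fin w,
          (if u ω a j then (1 : ℝ) else 0) * (if v ω b j then (1 : ℝ) else 0)),
        Pr ω) ≤ ε)
    (hpromise : (∃ a b, F a b = some true) ∨ (∀ a b, F a b = some false)) :
    1 - ε * Fintype.card A * Fintype.card B ≤
      ∑ ω ∈ Finset.univ.filter (fun ω : Ω =>
        (0 < ∑ j : Fin w,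
            (∑ a : A, if u ω a j then (1 : ℝ) else 0) *
            (∑ b : B, if v ω b j then (1 : ℝ) else 0))
          ↔ (∃ a b, F a b = some true)),
        Pr ω := by
  classical
  set S : A → B → Ω → ℝ := fun a b ω => ∑ j : Fin w,
      (if u ω a j then (1 : ℝ) else 0) * (if v ω b j then (1 : ℝ) else 0) with hSdef
  have hSnn : ∀ a b ω, 0 ≤ S a b ω := by
    intro a b ω
    apply Finset.sum_nonneg
    intro j _
    positivity
  have hagg : ∀ ω : Ω, (∑ j : Fin w,
      (∑ a : A, if u ω a j then (1 : ℝ) else 0) *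
      (∑ b : B, if v ω b j then (1 : ℝ) else 0)) = ∑ a : A, ∑ b : B, S a b ω := by
    intro ω
    simp only [hSdef, Finset.sum_mul, Finset.mul_sum]
    exact (Finset.sum_congr rfl fun j _ => Finset.sum_comm).trans
      (Finset.sum_comm.trans (Finset.sum_congr rfl fun a _ => Finset.sum_comm))
  have hpos_iff : ∀ ω : Ω, (0 < ∑ j : Fin w,
      (∑ a : A, if u ω a j then (1 : ℝ) else 0) *
      (∑ b : B, if v ω b j then (1 : ℝ) else 0)) ↔ ∃ a b, 0 < S a b ω := by
    intro ω
    rw [hagg ω]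
    constructor
    · intro h
      by_contra hc
      push_neg at hc
      have : (∑ a : A, ∑ b : B, S a b ω) ≤ 0 := by
        apply Finset.sum_nonpos
        intro a _
        apply Finset.sum_nonpos
        intro b _
        exact hc a b
      linarith
    · rintro ⟨a, b, hab⟩
      have h1 : S a b ω ≤ ∑ b : B, S a b ω :=
        Finset.single_le_sum (fun b _ => hSnn a b ω) (Finset.mem_univ b)
      have h2 : (∑ b : B, S a b ω) ≤ ∑ a : A, ∑ b : B, S a b ω :=
        Finset.single_le_sum (fun a _ => Finset.sum_nonneg fun b _ => hSnn a b ω)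
          (Finset.mem_univ a)
      linarith
  rcases hpromise with ⟨a₀, b₀, hab⟩ | hall
  · -- yes case
    have hsub : (Finset.univ.filter (fun ω : Ω => 0 < S a₀ b₀ ω)) ⊆
        Finset.univ.filter (fun ω : Ω =>
          (0 < ∑ j : Fin w,
            (∑ a : A, if u ω a j then (1 : ℝ) else 0) *
            (∑ b : B, if v ω b j then (1 : ℝ) else 0)) ↔ (∃ a b, F a b = some true)) := by
      intro ω hω
      rw [Finset.mem_filter] at hω ⊢
      refine ⟨Finset.mem_univ _, iff_of_true ?_ ⟨a₀, b₀, hab⟩⟩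
      exact (hpos_iff ω).2 ⟨a₀, b₀, hω.2⟩
    have h1 := hyes a₀ b₀ hab
    have h2 : (∑ ω ∈ Finset.univ.filter (fun ω : Ω => 0 < S a₀ b₀ ω), Pr ω) ≤
        ∑ ω ∈ Finset.univ.filter (fun ω : Ω =>
          (0 < ∑ j : Fin w,
            (∑ a : A, if u ω a j then (1 : ℝ) else 0) *
            (∑ b : B, if v ω b j then (1 : ℝ) else 0)) ↔ (∃ a b, F a b = some true)), Pr ω :=
      Finset.sum_le_sum_of_subset_of_nonneg hsub (fun ω _ _ => hPr0 ω)
    have hA : (1 : ℝ) ≤ Fintype.card A := by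
      have : 0 < Fintype.card A := Fintype.card_pos_iff.2 ⟨a₀⟩
      exact_mod_cast this
    have hB : (1 : ℝ) ≤ Fintype.card B := by
      have : 0 < Fintype.card B := Fintype.card_pos_iff.2 ⟨b₀⟩
      exact_mod_cast this
    have e1 : ε ≤ ε * Fintype.card A := le_mul_of_one_le_right hε0 hA
    have e2 : ε * Fintype.card A ≤ ε * Fintype.card A * Fintype.card B :=
      le_mul_of_one_le_right (le_trans hε0 e1) hB
    have : ε ≤ ε * Fintype.card A * Fintype.card B := le_trans e1 e2
    linarith
  · -- no case
    have hexf : ¬ ∃ a b, F a b = some true := by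
      rintro ⟨a, b, h⟩
      have := hall a b
      rw [h] at this
      simp at this
    -- union bound
    have hite : ∀ a b ω, (0:ℝ) ≤ (if 0 < S a b ω then Pr ω else 0) := by
      intro a b ω
      split_ifs
      exacts [hPr0 ω, le_rfl]
    have hub : (∑ ω ∈ Finset.univ.filter (fun ω : Ω => ∃ a b, 0 < S a b ω), Pr ω)
        ≤ ε * Fintype.card A * Fintype.card B := by
      have step1 : (∑ ω ∈ Finset.univ.filter (fun ω : Ω => ∃ a b, 0 < S a b ω), Pr ω)
          ≤ ∑ a : A, ∑ b : B, ∑ ω ∈ Finset.univ.filter (fun ω : Ω => 0 < S a b ω), Pr ω := by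
        have swap : (∑ a : A, ∑ b : B, ∑ ω ∈ Finset.univ.filter (fun ω : Ω => 0 < S a b ω), Pr ω)
            = ∑ ω : Ω, ∑ a : A, ∑ b : B, (if 0 < S a b ω then Pr ω else 0) :=
          calc (∑ a : A, ∑ b : B, ∑ ω ∈ Finset.univ.filter (fun ω : Ω => 0 < S a b ω), Pr ω)
              = ∑ a : A, ∑ b : B, ∑ ω : Ω, (if 0 < S a b ω then Pr ω else 0) :=
                Finset.sum_congr rfl fun a _ => Finset.sum_congr rfl fun b _ =>
                  Finset.sum_filter _ _
            _ = ∑ a : A, ∑ ω : Ω, ∑ b : B, (if 0 < S a b ω then Pr ω else 0) :=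
                Finset.sum_congr rfl fun a _ => Finset.sum_comm
            _ = ∑ ω : Ω, ∑ a : A, ∑ b : B, (if 0 < S a b ω then Pr ω else 0) :=
                Finset.sum_comm
        rw [swap]
        calc (∑ ω ∈ Finset.univ.filter (fun ω : Ω => ∃ a b, 0 < S a b ω), Pr ω)
            ≤ ∑ ω ∈ Finset.univ.filter (fun ω : Ω => ∃ a b, 0 < S a b ω),
              ∑ a : A, ∑ b : B, (if 0 < S a b ω then Pr ω else 0) := by
              apply Finset.sum_le_sum
              intro ω hω
              rw [Finset.mem_filter] at hω
              obtain ⟨-, a, b, hab⟩ := hω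
              calc Pr ω = (if 0 < S a b ω then Pr ω else 0) := by rw [if_pos hab]
                _ ≤ ∑ b : B, (if 0 < S a b ω then Pr ω else 0) := by
                    apply Finset.single_le_sum (f := fun b => if 0 < S a b ω then Pr ω else 0)
                      (fun b _ => hite _ _ _) (Finset.mem_univ b)
                _ ≤ ∑ a : A, ∑ b : B, (if 0 < S a b ω then Pr ω else 0) := by
                    apply Finset.single_le_sum
                      (f := fun a => ∑ b : B, (if 0 < S a b ω then Pr ω else 0))
                      (fun a _ => Finset.sum_nonneg fun b _ => hite _ _ _)
                      (Finset.mem_univ a)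
          _ ≤ ∑ ω : Ω, ∑ a : A, ∑ b : B, (if 0 < S a b ω then Pr ω else 0) := by
              apply Finset.sum_le_sum_of_subset_of_nonneg (Finset.filter_subset _ _)
              intro ω _ _
              exact Finset.sum_nonneg fun a _ => Finset.sum_nonneg fun b _ => hite _ _ _
      have step2 : (∑ a : A, ∑ b : B, ∑ ω ∈ Finset.univ.filter (fun ω : Ω => 0 < S a b ω), Pr ω)
          ≤ ∑ _a : A, ∑ _b : B, ε := by
        apply Finset.sum_le_sum
        intro a _
        apply Finset.sum_le_sum
        intro b _
        -- need F a b = some false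
        exact hno a b (hall a b)
      have : (∑ _a : A, ∑ _b : B, ε) = ε * Fintype.card A * Fintype.card B := by
        simp [Finset.sum_const, mul_comm, mul_assoc, mul_left_comm]
      linarith
    have hsplit : (∑ ω ∈ Finset.univ.filter (fun ω : Ω => ∃ a b, 0 < S a b ω), Pr ω)
        + (∑ ω ∈ Finset.univ.filter (fun ω : Ω => ¬ ∃ a b, 0 < S a b ω), Pr ω) = 1 := by
      rw [Finset.sum_filter_add_sum_filter_not, hPr1]
    have hsub : (Finset.univ.filter (fun ω : Ω => ¬ ∃ a b, 0 < S a b ω)) ⊆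
        Finset.univ.filter (fun ω : Ω =>
          (0 < ∑ j : Fin w,
            (∑ a : A, if u ω a j then (1 : ℝ) else 0) *
            (∑ b : B, if v ω b j then (1 : ℝ) else 0)) ↔ (∃ a b, F a b = some true)) := by
      intro ω hω
      rw [Finset.mem_filter] at hω ⊢
      refine ⟨Finset.mem_univ _, iff_of_false ?_ hexf⟩
      rw [hpos_iff ω]
      exact hω.2
    have h2 := Finset.sum_le_sum_of_subset_of_nonneg hsub (fun ω _ _ => hPr0 ω)
    linarith
end
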